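/- Let X be a complete metric space, f : X → ℝ locally Lipschitz, M ⊆ X, and let x̄ be a local minimum of f on M. Let φ : X → ℝ be a nonnegative lower semicontinuous function with φ(x̄) = 0. Then either (a) there exists λ > 0 such that λf + φ attains an unconditional local minimum at x̄, or (b) there exists a sequence x_m ∉ closure(M) converging to x̄ such that for each m the function x ↦ φ(x) + (1/m)·d(x, x_m) attains a global minimum at x_m. -/

import Mathlib

open Metric Filter Topology Set

lemma ekeland_global {X : Type*} [MetricSpace X] [CompleteSpace X]
    (φ : X → ℝ) (hlsc : LowerSemicontinuous φ) (h0 : ∀ x, 0 ≤ φ x)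
    (κ : ℝ) (hκ : 0 < κ) (u : X) :
    ∃ v : X, φ v + κ * dist v u ≤ φ u ∧ ∀ x, φ v ≤ φ x + κ * dist x v := by
  set S : X → Set X := fun x => {y | φ y + κ * dist y x ≤ φ x} with hS
  have self_mem : ∀ x, x ∈ S x := by intro x; simp [hS]
  have trans : ∀ {x y}, y ∈ S x → S y ⊆ S x := by
    intro x y hy z hz
    simp only [hS, Set.mem_setOf_eq] at *
    have := dist_triangle z y x
    nlinarith
  have closed : ∀ x, IsClosed (S x) := by
    intro x
    have : LowerSemicontinuous (fun y => φ y + κ * dist y x) :=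
      hlsc.add ((continuous_const.mul (continuous_id.dist continuous_const)).lowerSemicontinuous)
    exact this.isClosed_preimage (φ x)
  set I : X → ℝ := fun x => sInf (φ '' S x) with hI
  have Ine : ∀ x, (φ '' S x).Nonempty := fun x => ⟨φ x, x, self_mem x, rfl⟩
  have Ibdd : ∀ x, BddBelow (φ '' S x) := by
    intro x; exact ⟨0, by rintro _ ⟨y, -, rfl⟩; exact h0 y⟩
  have Ile : ∀ {x y}, y ∈ S x → I x ≤ φ y := fun {x y} hy =>
    csInf_le (Ibdd x) ⟨y, hy, rfl⟩
  have hchoice : ∀ (n : ℕ) (x : X), ∃ y, y ∈ S x ∧ φ y ≤ I x + (1/2)^n := by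
    intro n x
    have h : I x < I x + (1/2)^n := by
      have : (0:ℝ) < (1/2:ℝ)^n := by positivity
      linarith
    obtain ⟨_, ⟨y, hy, rfl⟩, hlt⟩ := exists_lt_of_csInf_lt (Ine x) h
    exact ⟨y, hy, hlt.le⟩
  choose g hg1 hg2 using hchoice
  obtain ⟨seq, hseq0, hseqS⟩ : ∃ seq : ℕ → X, seq 0 = u ∧ ∀ n, seq (n+1) = g n (seq n) :=
    ⟨fun n => Nat.rec u g n, rfl, fun n => rfl⟩
  have step : ∀ n, seq (n+1) ∈ S (seq n) := by intro n; rw [hseqS]; exact hg1 n (seq n)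
  have chain : ∀ m n, m ≤ n → seq n ∈ S (seq m) := by
    intro m n hmn
    induction n with
    | zero => simp_all [Nat.le_zero.mp hmn, self_mem]
    | succ k ih =>
      rcases Nat.lt_or_ge m (k+1) with h | h
      · exact trans (ih (Nat.lt_succ_iff.mp h)) (step k)
      · have : m = k + 1 := le_antisymm hmn h
        subst this; exact self_mem _
  have key : ∀ n, ∀ y ∈ S (seq (n+1)), κ * dist y (seq (n+1)) ≤ (1/2)^n := by
    intro n y hy
    have h1 : φ (seq (n+1)) ≤ I (seq n) + (1/2)^n := by rw [hseqS]; exact hg2 n (seq n)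
    have h2 : I (seq n) ≤ φ y := Ile (trans (step n) hy)
    have h3 : φ y + κ * dist y (seq (n+1)) ≤ φ (seq (n+1)) := hy
    linarith
  have hdist : ∀ n, dist (seq n) (seq (n+1)) ≤ ((φ u + 2)/κ) * (1/2)^n := by
    intro n
    cases n with
    | zero =>
      simp only [zero_add]
      have h : φ (seq 1) + κ * dist (seq 1) (seq 0) ≤ φ (seq 0) := step 0
      rw [hseq0] at h
      have h1 := h0 (seq 1)
      have h2 := h0 u
      rw [hseq0, pow_zero, mul_one, dist_comm, le_div_iff₀ hκ]
      nlinarith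
    | succ k =>
      have h := key k (seq (k+2)) (step (k+1))
      rw [dist_comm]
      have h2 := h0 u
      have hp : (0:ℝ) < (1/2:ℝ)^(k+1) := by positivity
      rw [div_mul_eq_mul_div, le_div_iff₀ hκ]
      have : (1/2:ℝ)^k = 2 * (1/2)^(k+1) := by ring
      nlinarith
  have hC : CauchySeq seq :=
    cauchySeq_of_le_geometric (1/2) ((φ u + 2)/κ) (by norm_num) hdist
  obtain ⟨v, hv⟩ := cauchySeq_tendsto_of_complete hC
  have hvS : ∀ m, v ∈ S (seq m) := by
    intro m
    apply (closed (seq m)).mem_of_tendsto hv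
    filter_upwards [eventually_ge_atTop m] with n hn
    exact chain m n hn
  have hd0 : Tendsto (fun n : ℕ => (2/κ) * (1/2:ℝ)^n) atTop (𝓝 0) := by
    simpa using (tendsto_pow_atTop_nhds_zero_of_lt_one (by norm_num : (0:ℝ) ≤ 1/2)
      (by norm_num : (1/2:ℝ) < 1)).const_mul (2/κ)
  refine ⟨v, by have h := hvS 0; rw [hseq0] at h; exact h, ?_⟩
  intro x
  by_contra hx
  push_neg at hx
  have hxv : x ∈ S v := le_of_lt hx
  have hdxv : dist x v ≤ 0 := by
    apply ge_of_tendsto' hd0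
    intro n
    have h1 : κ * dist x (seq (n+1)) ≤ (1/2)^n := key n x (trans (hvS (n+1)) hxv)
    have h2 : κ * dist v (seq (n+1)) ≤ (1/2)^n := key n v (hvS (n+1))
    have h3 := dist_triangle x (seq (n+1)) v
    have h4 : dist (seq (n+1)) v = dist v (seq (n+1)) := dist_comm _ _
    rw [div_mul_eq_mul_div, le_div_iff₀ hκ]
    nlinarith
  have : x = v := by
    rw [← dist_le_zero]; exact hdxv
  subst this
  rw [dist_self, mul_zero, add_zero] at hx
  exact lt_irrefl _ hx

/-- The optimality alternative. -/
theorem optimality_alternative {X : Type*} [MetricSpace X] [CompleteSpace X]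
    (f : X → ℝ) (hf : LocallyLipschitz f)
    (M : Set X) (xb : X) (hxbM : xb ∈ M)
    (hmin : ∃ r > 0, ∀ x ∈ M ∩ ball xb r, f xb ≤ f x)
    (φ : X → ℝ) (hφ0 : ∀ x, 0 ≤ φ x) (hφlsc : LowerSemicontinuous φ)
    (hφxb : φ xb = 0) :
    (∃ lam > (0:ℝ), ∃ r > (0:ℝ), ∀ x ∈ ball xb r, lam * f xb + φ xb ≤ lam * f x + φ x) ∨
    (∃ xs : ℕ → X, (∀ m, xs m ∉ closure M) ∧ Tendsto xs atTop (𝓝 xb) ∧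
      ∀ m : ℕ, ∀ x : X, φ (xs m) ≤ φ x + (1 / (m + 1 : ℝ)) * dist x (xs m)) := by
  by_cases ha : ∃ lam > (0:ℝ), ∃ r > (0:ℝ), ∀ x ∈ ball xb r,
      lam * f xb + φ xb ≤ lam * f x + φ x
  · exact Or.inl ha
  right
  push_neg at ha
  obtain ⟨K, s, hs, hK⟩ := hf xb
  obtain ⟨r₀, hr₀, hminr⟩ := hmin
  obtain ⟨ε, hε, hεs⟩ := Metric.mem_nhds_iff.mp hs
  set r : ℝ := min r₀ ε with hr
  have hrpos : 0 < r := lt_min hr₀ hε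
  have hballs : ball xb r ⊆ s := fun x hx =>
    hεs (ball_subset_ball (min_le_right _ _) hx)
  have hballmin : ∀ x ∈ M ∩ ball xb r, f xb ≤ f x := fun x hx =>
    hminr x ⟨hx.1, ball_subset_ball (min_le_left _ _) hx.2⟩
  set L : ℝ := (K : ℝ) + 1 with hLdef
  have hK0 : (0:ℝ) ≤ (K:ℝ) := K.coe_nonneg
  have hLpos : 0 < L := by positivity
  have hfc : Continuous f := hf.continuous
  have hclos : ∀ x ∈ closure M, x ∈ ball xb r → f xb ≤ f x := by
    intro x hx hxb'
    have h1 : x ∈ closure (ball xb r ∩ M) := isOpen_ball.inter_closure ⟨hxb', hx⟩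
    have h2 : IsClosed {y | f xb ≤ f y} := isClosed_le continuous_const hfc
    exact h2.closure_subset_iff.mpr (fun y hy => hballmin y ⟨hy.2, hy.1⟩) h1
  have main : ∀ m : ℕ, ∃ x : X, x ∉ closure M ∧ dist x xb ≤ 2 * (1/((m:ℝ)+1)) ∧
      ∀ y, φ x ≤ φ y + (1/((m:ℝ)+1)) * dist y x := by
    intro m
    set c : ℝ := 1/((m:ℝ)+1) with hc
    have hcpos : 0 < c := by positivity
    set lam : ℝ := c / L with hlam
    have hlampos : 0 < lam := div_pos hcpos hLpos
    have hlamL : lam * L = c := div_mul_cancel₀ c hLpos.ne'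
    set rm : ℝ := min (r/2) c with hrm
    have hrmpos : 0 < rm := lt_min (by linarith) hcpos
    have hrmr : rm ≤ r/2 := min_le_left _ _
    obtain ⟨u, hu, hlt⟩ := ha lam hlampos rm hrmpos
    rw [hφxb, add_zero] at hlt
    have hus : u ∈ s := hballs (ball_subset_ball (by linarith) hu)
    have hxbs : xb ∈ s := hballs (mem_ball_self hrpos)
    have hfu : f xb - f u ≤ L * dist u xb := by
      have h := hK.dist_le_mul xb hxbs u hus
      rw [Real.dist_eq] at h
      have := le_abs_self (f xb - f u)
      have hd : dist xb u = dist u xb := dist_comm _ _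
      nlinarith [dist_nonneg (x := u) (y := xb)]
    have hdu : dist u xb < rm := mem_ball.mp hu
    have hφu : φ u < c * rm := by
      have h1 : φ u < lam * (f xb - f u) := by linarith
      have h2 : lam * (f xb - f u) ≤ lam * (L * dist u xb) :=
        mul_le_mul_of_nonneg_left hfu hlampos.le
      have h3 : lam * (L * dist u xb) < lam * L * rm := by
        rw [mul_assoc]
        exact mul_lt_mul_of_pos_left (mul_lt_mul_of_pos_left hdu hLpos) hlampos
      rw [hlamL] at h3
      linarith
    obtain ⟨v, hv1, hv2⟩ := ekeland_global φ hφlsc hφ0 c hcpos u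
    have hdvu : dist v u < rm := by
      have := hφ0 v
      nlinarith
    have hdvxb : dist v xb < 2 * rm :=
      lt_of_le_of_lt (dist_triangle v u xb) (by linarith)
    have hvr : v ∈ ball xb r := mem_ball.mpr (by linarith)
    refine ⟨v, ?_, ?_, fun y => hv2 y⟩
    · intro hvM
      have h1 : f xb ≤ f v := hclos v hvM hvr
      have h2 : f v - f u ≤ L * dist v u := by
        have h := hK.dist_le_mul v (hballs hvr) u hus
        rw [Real.dist_eq] at h
        have := le_abs_self (f v - f u)
        nlinarith [dist_nonneg (x := v) (y := u)]
      have h3 : lam * f xb ≤ lam * f v + φ v := by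
        nlinarith [hφ0 v]
      -- hv1 : φ v + c * dist v u ≤ φ u ; hlt : lam * f u + φ u < lam * f xb
      have h4 : lam * (f v - f u) ≤ lam * (L * dist v u) :=
        mul_le_mul_of_nonneg_left h2 hlampos.le
      have h5 : lam * (L * dist v u) = c * dist v u := by rw [← mul_assoc, hlamL]
      nlinarith
    · have : rm ≤ c := min_le_right _ _
      linarith
  choose xs hxs1 hxs2 hxs3 using main
  refine ⟨xs, hxs1, ?_, ?_⟩
  · rw [tendsto_iff_dist_tendsto_zero]
    apply squeeze_zero (fun n => dist_nonneg) hxs2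
    have := tendsto_one_div_add_atTop_nhds_zero_nat.const_mul (2:ℝ)
    simpa using this
  · intro m x
    have := hxs3 m x
    convert this using 3 <;> push_cast <;> ring
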